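/- With the hypotheses of the previous statement (skew polynomial ring $R_f$ with all $f(l) = 0$, i.e. relations $x_{l+1} x_l = q_{l+1,l} x_l x_{l+1}$ for consecutive indices and $x_k x_l = q_{kl} x_l x_k$ for $|k-l| \geq 2$, and $q$ of odd order $N$), the $N$-th power of the root vector satisfies $x_{ij}^N = (q-1)^{N(j-i-1)}\, \tau_{ij}^{(N-1)/2}\, x_i^N x_{i+1}^N \cdots x_{j-1}^N$, where $\tau_{ij} = \prod_{i \leq k < l < j} q_{lk}^N$. -/

import Mathlib

/-- The root vector `x_{il}`: `x_{i,i+1} = x_i` and, for `l - i ≥ 2`,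
`x_{il} = [x_i, x_{i+1,l}]_c = x_i x_{i+1,l} - (q_{i,i+1} ⋯ q_{i,l-1}) • x_{i+1,l} x_i`. -/
def rootVec {k A : Type*} [CommRing k] [Ring A] [Algebra k A]
    (x : ℕ → A) (Q : ℕ → ℕ → k) : ℕ → ℕ → A
  | i, l =>
    if l ≤ i + 1 then x i
    else x i * rootVec x Q (i + 1) l
      - (∏ p ∈ Finset.Ioo i l, Q i p) • (rootVec x Q (i + 1) l * x i)
  termination_by i l => l - i
  decreasing_by all_goals omega

theorem Nat.Ico_succ_left (a b : ℕ) : Finset.Ico (a + 1) b = Finset.Ioo a b := by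
  ext x
  simp only [Finset.mem_Ico, Finset.mem_Ioo]
  omega

section aux
variable {k A : Type*} [CommRing k] [Ring A] [Algebra k A]

lemma swap_pow_left {a b : A} {c : k} (h : b * a = c • (a * b)) (n : ℕ) :
    b ^ n * a = c ^ n • (a * b ^ n) := by
  induction n with
  | zero => simp
  | succ n ih =>
    rw [pow_succ, mul_assoc, h, mul_smul_comm, ← mul_assoc, ih, smul_mul_assoc, smul_smul,
      mul_assoc, ← pow_succ, ← pow_succ']

lemma mul_pow_skew {a b : A} {c : k} (h : b * a = c • (a * b)) (n : ℕ) :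
    (a * b) ^ n = c ^ n.choose 2 • (a ^ n * b ^ n) := by
  induction n with
  | zero => simp
  | succ n ih =>
    rw [pow_succ, ih, smul_mul_assoc, mul_assoc, ← mul_assoc (b ^ n), swap_pow_left h,
      smul_mul_assoc, mul_smul_comm, smul_smul, ← pow_add]
    have he : n.choose 2 + n = (n + 1).choose 2 := by
      rw [Nat.choose_succ_succ, Nat.choose_one_right, add_comm]
    rw [he]
    congr 1
    rw [pow_succ a, pow_succ b]
    noncomm_ring


lemma list_mul_swap (x : ℕ → A) (Q : ℕ → ℕ → k) (m : ℕ) :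
    ∀ n s, (∀ p, s ≤ p → p < s + n → x p * x m = Q p m • (x m * x p)) →
    ((List.range' s n).map x).prod * x m
      = (∏ p ∈ Finset.Ico s (s + n), Q p m) • (x m * ((List.range' s n).map x).prod) := by
  intro n
  induction n with
  | zero => intro s _; simp
  | succ n ih =>
    intro s h
    rw [List.range'_succ, List.map_cons, List.prod_cons, mul_assoc,
      ih (s + 1) (fun p hp1 hp2 => h p (by omega) (by omega)), mul_smul_comm,
      Finset.prod_eq_prod_Ico_succ_bot (by omega : s < s + (n + 1)), mul_smul,
      ← mul_assoc, h s le_rfl (by omega), smul_mul_assoc, mul_assoc]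
    rw [smul_smul, smul_smul, mul_comm, show s + 1 + n = s + (n + 1) by omega]


lemma prod_pow_skew (x : ℕ → A) (Q : ℕ → ℕ → k) (N : ℕ) :
    ∀ n s, (∀ a b, s ≤ a → a < b → b < s + n → x b * x a = Q b a • (x a * x b)) →
    (((List.range' s n).map x).prod) ^ N
      = (∏ b ∈ Finset.Ioo s (s + n), ∏ a ∈ Finset.Ico s b, Q b a ^ N.choose 2) •
        ((List.range' s n).map (fun t => x t ^ N)).prod := by
  intro n
  induction n with
  | zero => intro s _; simp
  | succ n ih =>
    intro s h
    have hM := list_mul_swap x Q s n (s + 1)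
      (fun p hp1 hp2 => h s p le_rfl (by omega) (by omega))
    rw [List.range'_succ, List.map_cons, List.prod_cons, List.map_cons, List.prod_cons,
      mul_pow_skew hM, ih (s + 1) (fun a b ha hab hb => h a b (by omega) hab (by omega)),
      mul_smul_comm, smul_smul]
    congr 1
    rw [← Finset.prod_pow]
    -- Now prove the scalar identity
    have hsplit : ∀ b ∈ Finset.Ioo s (s + (n + 1)),
        (∏ a ∈ Finset.Ico s b, Q b a ^ N.choose 2)
          = Q b s ^ N.choose 2 * ∏ a ∈ Finset.Ico (s + 1) b, Q b a ^ N.choose 2 := by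
      intro b hb
      rw [Finset.mem_Ioo] at hb
      exact Finset.prod_eq_prod_Ico_succ_bot hb.1 _
    rw [Finset.prod_congr rfl hsplit, Finset.prod_mul_distrib]
    congr 1
    · rw [← Nat.Ico_succ_left, show s + 1 + n = s + (n + 1) by omega]
    · apply Finset.prod_subset
      · intro b hb
        rw [Finset.mem_Ioo] at hb ⊢
        omega
      · intro b hb hnb
        rw [Finset.mem_Ioo] at hb
        have : b = s + 1 := by
          rw [Finset.mem_Ioo] at hnb
          omega
        subst this
        simp

end aux

lemma rootVec_collapse {k A : Type*} [Field k] [Ring A] [Algebra k A] (q : k) (hq0 : q ≠ 0)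
    (i j : ℕ) (Q : ℕ → ℕ → k) (x : ℕ → A)
    (hQ1 : ∀ a b, i ≤ a → a ≤ j - 1 → i ≤ b → b ≤ j - 1 → (a + 1 = b ∨ b + 1 = a) →
      Q a b * Q b a = q⁻¹)
    (hQ2 : ∀ a b, i ≤ a → a ≤ j - 1 → i ≤ b → b ≤ j - 1 → (a + 2 ≤ b ∨ b + 2 ≤ a) →
      Q a b * Q b a = 1)
    (hrel1 : ∀ l, i ≤ l → l + 2 ≤ j → x (l + 1) * x l = Q (l + 1) l • (x l * x (l + 1)))
    (hrel2 : ∀ a b, i ≤ a → a ≤ j - 1 → i ≤ b → b ≤ j - 1 → (a + 2 ≤ b ∨ b + 2 ≤ a) →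
      x a * x b = Q a b • (x b * x a)) :
    ∀ n m, i ≤ m → m < j → j = m + n →
      rootVec x Q m j
        = (q⁻¹ * (q - 1)) ^ (j - m - 1) • ((List.range' m (j - m)).map x).prod := by
  intro n
  induction n with
  | zero => intro m _ hm hj; omega
  | succ n ih =>
    intro m him hmj hj
    rcases Nat.eq_zero_or_pos n with hn0 | hn1
    · subst hn0
      rw [rootVec, if_pos (by omega), show j - m = 1 by omega]
      simp [List.range'_one]
    · -- recursive case: m + 2 ≤ j
      have hm2 : m + 2 ≤ j := by omega
      rw [rootVec, if_neg (by omega),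
        ih (m + 1) (by omega) (by omega) (by omega)]
      have hswap := list_mul_swap x Q m (j - (m + 1)) (m + 1)
        (fun p hp1 hp2 => by
          rcases Nat.eq_or_lt_of_le hp1 with hp | hp
          · rw [← hp]; exact hrel1 m him hm2
          · exact hrel2 p m (by omega) (by omega) him (by omega) (Or.inr (by omega)))
      rw [show m + 1 + (j - (m + 1)) = j by omega] at hswap
      set M := ((List.range' (m + 1) (j - (m + 1))).map x).prod with hM
      rw [smul_mul_assoc, hswap, mul_smul_comm, smul_smul, smul_smul, ← sub_smul,
        show j - m = (j - (m + 1)) + 1 by omega, List.range'_succ, List.map_cons,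
        List.prod_cons]
      congr 1
      have hprod : (∏ p ∈ Finset.Ioo m j, Q m p) * ∏ p ∈ Finset.Ico (m + 1) j, Q p m
          = q⁻¹ := by
        rw [Nat.Ico_succ_left, ← Finset.prod_mul_distrib]
        have hins : Finset.Ioo m j = insert (m + 1) (Finset.Ioo (m + 1) j) := by
          rw [Finset.Ioo_insert_left (show m + 1 < j by omega), Nat.Ico_succ_left]
        rw [hins, Finset.prod_insert (by simp),
          hQ1 m (m + 1) him (by omega) (by omega) (by omega) (Or.inl rfl),
          Finset.prod_eq_one (fun p hp => by
            rw [Finset.mem_Ioo] at hp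
            exact hQ2 m p him (by omega) (by omega) (by omega) (Or.inl (by omega))),
          mul_one]
      have h2 : (∏ p ∈ Finset.Ioo m j, Q m p) * (q⁻¹ * (q - 1)) ^ (j - (m + 1) - 1)
            * ∏ p ∈ Finset.Ico (m + 1) j, Q p m
          = (q⁻¹ * (q - 1)) ^ (j - (m + 1) - 1) * q⁻¹ := by
        rw [← hprod]; ring
      rw [h2, show j - (m + 1) + 1 - 1 = (j - (m + 1) - 1) + 1 by omega, pow_succ]
      field_simp


/-- Under the hypotheses of Statement 6 (skew polynomial ring `R_f`
with `f = (0)`, i.e. relations `x_{l+1} x_l = q_{l+1,l} x_l x_{l+1}` for consecutive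
indices, `x_k x_l = q_{kl} x_l x_k` for `|k-l| ≥ 2`, and `q` of odd order `N > 1`),
`x_{ij}^N = (q-1)^{N(j-i-1)} τ_{ij}^{(N-1)/2} x_i^N x_{i+1}^N ⋯ x_{j-1}^N`,
where `τ_{ij} = ∏_{i ≤ k < l < j} q_{lk}^N`. -/
theorem stmt_7 {k A : Type*} [Field k] [Ring A] [Algebra k A]
    (N : ℕ) (hNodd : Odd N) (hN1 : 1 < N) (q : k) (hq : IsPrimitiveRoot q N)
    (i j : ℕ) (hij : i < j) (Q : ℕ → ℕ → k)
    (hQdiag : ∀ l, i ≤ l → l ≤ j - 1 → Q l l = q)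
    (hQ1 : ∀ a b, i ≤ a → a ≤ j - 1 → i ≤ b → b ≤ j - 1 → (a + 1 = b ∨ b + 1 = a) →
      Q a b * Q b a = q⁻¹)
    (hQ2 : ∀ a b, i ≤ a → a ≤ j - 1 → i ≤ b → b ≤ j - 1 → (a + 2 ≤ b ∨ b + 2 ≤ a) →
      Q a b * Q b a = 1)
    (x : ℕ → A)
    (hrel1 : ∀ l, i ≤ l → l + 2 ≤ j → x (l + 1) * x l = Q (l + 1) l • (x l * x (l + 1)))
    (hrel2 : ∀ a b, i ≤ a → a ≤ j - 1 → i ≤ b → b ≤ j - 1 → (a + 2 ≤ b ∨ b + 2 ≤ a) →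
      x a * x b = Q a b • (x b * x a)) :
    rootVec x Q i j ^ N
      = ((q - 1) ^ (N * (j - i - 1)) *
          (∏ b ∈ Finset.Ioo i j, ∏ a ∈ Finset.Ico i b, Q b a ^ N) ^ ((N - 1) / 2)) •
        ((List.range' i (j - i)).map fun t => x t ^ N).prod := by

  have hqN : q ^ N = 1 := hq.pow_eq_one
  have hq0 : q ≠ 0 := by
    intro h
    rw [h, zero_pow (by omega)] at hqN
    exact one_ne_zero hqN.symm
  have hcol := rootVec_collapse q hq0 i j Q x hQ1 hQ2 hrel1 hrel2 (j - i) i le_rfl hij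
    (by omega)
  have hcomm : ∀ a b, i ≤ a → a < b → b < i + (j - i) →
      x b * x a = Q b a • (x a * x b) := by
    intro a b ha hab hb
    by_cases hb1 : b = a + 1
    · subst hb1; exact hrel1 a ha (by omega)
    · exact hrel2 b a (by omega) (by omega) ha (by omega) (Or.inr (by omega))
  have hps := prod_pow_skew x Q N (j - i) i hcomm
  rw [Nat.add_sub_cancel' hij.le] at hps
  rw [hcol, smul_pow, hps, smul_smul]
  congr 1
  obtain ⟨t, ht⟩ := hNodd
  have hch : N.choose 2 = N * ((N - 1) / 2) := by
    rw [Nat.choose_two_right]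
    subst ht
    rw [show 2 * t + 1 - 1 = 2 * t by omega, Nat.mul_div_assoc _ (Dvd.intro t rfl),
      show 2 * t / 2 = t by omega]

  have hS : (∏ b ∈ Finset.Ioo i j, ∏ a ∈ Finset.Ico i b, Q b a ^ N.choose 2)
      = (∏ b ∈ Finset.Ioo i j, ∏ a ∈ Finset.Ico i b, Q b a ^ N) ^ ((N - 1) / 2) := by
    rw [← Finset.prod_pow]
    refine Finset.prod_congr rfl (fun b _ => ?_)
    rw [← Finset.prod_pow]
    exact Finset.prod_congr rfl (fun a _ => by rw [← pow_mul, hch])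
  rw [hS]
  congr 1
  rw [← pow_mul, mul_pow, inv_pow, show (j - i - 1) * N = N * (j - i - 1) by ring,
    pow_mul, hqN, one_pow, inv_one, one_mul]
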